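/- For every compression function q for length n, if |q(x)| < n for the lexicographically first element x of A_{BB(m)}^n, then the maximum over all strings y of length n of the halting time of U on input q(y) is strictly greater than BB(m). -/
import Mathlib


/-- `A s ℓ`: strings of length `ℓ` not output within `s` steps by any program
of length less than `ℓ`. -/
def Aset (Ustep : ℕ → List Bool → Option (List Bool)) (s ℓ : ℕ) :
    Set (List Bool) :=
  {y | y.length = ℓ ∧ ¬ ∃ p : List Bool, p.length < ℓ ∧ Ustep s p = some y}

/-- The halting time of program `p`: the least `s` with `Ustep s p` defined. -/
noncomputable def haltTime (Ustep : ℕ → List Bool → Option (List Bool))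
    (p : List Bool) : ℕ :=
  sInf {s | (Ustep s p).isSome = true}

/-- Busy beaver: the maximum halting time over halting programs of length ≤ `m`. -/
noncomputable def BB (Ustep : ℕ → List Bool → Option (List Bool)) (m : ℕ) : ℕ :=
  sSup {t | ∃ p : List Bool, p.length ≤ m ∧ (∃ s, (Ustep s p).isSome = true) ∧
    t = haltTime Ustep p}

/-- Let `x` be the lexicographically first element of `A_{BB(m)}^n`.  For every
compression function `q` for length `n`, if `|q(x)| < n` then the maximum over
strings `y` of length `n` of the halting time of `U` on `q(y)` exceeds `BB(m)`. -/
theorem small_compression_forces_long_time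
    (U : List Bool → Option (List Bool))
    (Ustep : ℕ → List Bool → Option (List Bool))
    (hmono : ∀ s s' p : _, s ≤ s' → (Ustep s p).isSome = true → Ustep s' p = Ustep s p)
    (hlim : ∀ p y : List Bool, U p = some y ↔ ∃ s, Ustep s p = some y)
    (m n : ℕ)
    (x : List Bool)
    (hxA : x ∈ Aset Ustep (BB Ustep m) n)
    (hxfirst : ∀ y ∈ Aset Ustep (BB Ustep m) n, ¬ List.Lex (· < ·) y x)
    (q : List Bool → List Bool)
    (hq : ∀ y : List Bool, y.length = n → U (q y) = some y)
    (hqx : (q x).length < n) :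
    BB Ustep m < sSup {t | ∃ y : List Bool, y.length = n ∧ t = haltTime Ustep (q y)} := by
  -- halting time of q x exceeds BB
  obtain ⟨hxlen, hxno⟩ := hxA
  obtain ⟨s, hs⟩ := (hlim (q x) x).mp (hq x hxlen)
  have hsS : s ∈ {s | (Ustep s (q x)).isSome = true} := by simp [Set.mem_setOf_eq, hs]
  have hne : {s | (Ustep s (q x)).isSome = true}.Nonempty := ⟨s, hsS⟩
  set t := haltTime Ustep (q x) with ht
  have htmem : (Ustep t (q x)).isSome = true := Nat.sInf_mem hne
  have hts : t ≤ s := Nat.sInf_le hsS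
  have htx : Ustep t (q x) = some x := by
    rw [← hmono t s (q x) hts htmem, hs]
  have hBBlt : BB Ustep m < t := by
    by_contra h
    push_neg at h
    have : Ustep (BB Ustep m) (q x) = some x := by
      rw [hmono t (BB Ustep m) (q x) h htmem, htx]
    exact hxno ⟨q x, hqx, this⟩
  refine lt_of_lt_of_le hBBlt (le_csSup ?_ ⟨x, hxlen, rfl⟩)
  have hfin : {t | ∃ y : List Bool, y.length = n ∧ t = haltTime Ustep (q y)}.Finite := by
    have : {t | ∃ y : List Bool, y.length = n ∧ t = haltTime Ustep (q y)} =
        (fun y => haltTime Ustep (q y)) '' {y : List Bool | y.length = n} := by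
      ext t; simp [Set.mem_image, eq_comm]
    rw [this]
    exact (List.finite_length_eq Bool n).image _
  exact hfin.bddAbove
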